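/- Fix real constants m₀ > 0, ω > 0, ħ > 0, a > -1, γ > 1/2, set λ₀ = √(m₀ω/ħ) and α = (1/2)·( (2γ-1)/(a+1) - 1 ). For a nonnegative integer m let L_m^{(α)}(t) = Σ_{k=0}^{m} (-1)^k · Γ(m+α+1) / ( Γ(k+α+1)·(m-k)!·k! ) · t^k be the generalized Laguerre polynomial, and define ψ_{2m}(x) = (λ₀²x²)^{(a+2γ-1)/4}·exp( -(λ₀²x²)^{a+1}/(2(a+1)) )·L_m^{(α)}( (λ₀²x²)^{a+1}/(a+1) ). Then for every x ≠ 0: ψ_{2m}''(x) - (2a/x)·ψ_{2m}'(x) + [ ( a(3a+2)/4 + (a+1)(γ-1/2) - (γ-1/2)² )·x⁻² + κ²λ₀^{2a}|x|^{2a} - λ₀^{4a+4}|x|^{4a}x² ]·ψ_{2m}(x) = 0, where κ² = λ₀²·( (a+1)(4m+1) + 2γ - 1 ); equivalently ψ_{2m} solves the even-parity Schrödinger equation with energy E_{2m} = ħ²κ²/(2m₀) = (a+1)·ħω·( 2m + 1/2 + (γ-1/2)/(a+1) ). -/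

import Mathlib

noncomputable def lagPoly (α : ℝ) (m : ℕ) (t : ℝ) : ℝ :=
  ∑ k ∈ Finset.range (m + 1),
    (-1 : ℝ) ^ k * Real.Gamma ((m : ℝ) + α + 1)
      / (Real.Gamma ((k : ℝ) + α + 1) * (Nat.factorial (m - k) : ℝ) * (Nat.factorial k : ℝ))
      * t ^ k

noncomputable def lagCoef (α : ℝ) (m k : ℕ) : ℝ :=
  (-1 : ℝ) ^ k * Real.Gamma ((m : ℝ) + α + 1)
      / (Real.Gamma ((k : ℝ) + α + 1) * (Nat.factorial (m - k) : ℝ) * (Nat.factorial k : ℝ))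

noncomputable def lagPoly' (α : ℝ) (m : ℕ) (t : ℝ) : ℝ :=
  ∑ k ∈ Finset.range (m + 1), lagCoef α m k * ((k : ℝ) * t ^ (k - 1))

noncomputable def lagPoly'' (α : ℝ) (m : ℕ) (t : ℝ) : ℝ :=
  ∑ k ∈ Finset.range (m + 1), lagCoef α m k * ((k : ℝ) * (((k:ℝ) - 1) * t ^ (k - 1 - 1)))

lemma hasDerivAt_lagPoly (α : ℝ) (m : ℕ) (t : ℝ) :
    HasDerivAt (lagPoly α m) (lagPoly' α m t) t := by
  have : HasDerivAt (fun t : ℝ => ∑ k ∈ Finset.range (m + 1), lagCoef α m k * t ^ k)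
      (∑ k ∈ Finset.range (m + 1), lagCoef α m k * ((k : ℝ) * t ^ (k - 1))) t := by
    apply HasDerivAt.fun_sum
    intro k _
    simpa [mul_comm, mul_assoc, mul_left_comm] using (hasDerivAt_pow k t).const_mul (lagCoef α m k)
  exact this

lemma hasDerivAt_lagPoly' (α : ℝ) (m : ℕ) (t : ℝ) :
    HasDerivAt (lagPoly' α m) (lagPoly'' α m t) t := by
  apply HasDerivAt.fun_sum
  intro k _
  have h := ((hasDerivAt_pow (k-1) t).const_mul ((k:ℝ))).const_mul (lagCoef α m k)
  rcases k with _ | k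
  · simpa using h
  · convert h using 1
    · rfl
    push_cast [Nat.add_sub_cancel]
    ring

lemma lag_ode (α : ℝ) (hα : -1 < α) (m : ℕ) (t : ℝ) :
    t * lagPoly'' α m t + (α + 1 - t) * lagPoly' α m t + (m : ℝ) * lagPoly α m t = 0 := by
  have expand : t * lagPoly'' α m t + (α + 1 - t) * lagPoly' α m t + (m : ℝ) * lagPoly α m t
      = ∑ k ∈ Finset.range (m + 1),
          (lagCoef α m k * ((k:ℝ) * ((k:ℝ) + α) * t ^ (k - 1))
            + lagCoef α m k * (((m:ℝ) - k) * t ^ k)) := by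
    unfold lagPoly lagPoly' lagPoly''
    rw [Finset.mul_sum, Finset.mul_sum, Finset.mul_sum, ← Finset.sum_add_distrib,
      ← Finset.sum_add_distrib]
    apply Finset.sum_congr rfl
    intro k _
    have hcoef : (-1 : ℝ) ^ k * Real.Gamma ((m : ℝ) + α + 1)
      / (Real.Gamma ((k : ℝ) + α + 1) * (Nat.factorial (m - k) : ℝ) * (Nat.factorial k : ℝ))
      = lagCoef α m k := rfl
    rw [hcoef]
    rcases k with _ | _ | k
    · simp [mul_comm]
    · norm_num; ring
    · push_cast [Nat.add_sub_cancel]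
      ring
  rw [expand, Finset.sum_add_distrib]
  rw [Finset.sum_range_succ' (fun k => lagCoef α m k * ((k:ℝ) * ((k:ℝ) + α) * t ^ (k - 1)))]
  rw [Finset.sum_range_succ (fun k => lagCoef α m k * (((m:ℝ) - k) * t ^ k))]
  simp only [Nat.cast_zero, zero_mul, mul_zero, sub_self, add_zero, Nat.cast_ofNat,
    Nat.add_sub_cancel, Nat.cast_add, Nat.cast_one]
  rw [← Finset.sum_add_distrib]
  apply Finset.sum_eq_zero
  intro j hj
  have hjm : j < m := Finset.mem_range.mp hj
  have key : lagCoef α m (j+1) * ((j:ℝ)+1) * ((j:ℝ)+1+α) + lagCoef α m j * ((m:ℝ) - j) = 0 := by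
    unfold lagCoef
    have hΓpos : 0 < Real.Gamma ((j:ℝ) + α + 1) :=
      Real.Gamma_pos_of_pos (by linarith [Nat.cast_nonneg (α := ℝ) j])
    have hjα : 0 < (j:ℝ) + α + 1 := by
      have := Nat.cast_nonneg (α := ℝ) j; linarith
    have hΓrec : Real.Gamma ((j:ℝ) + 1 + α + 1) = ((j:ℝ) + α + 1) * Real.Gamma ((j:ℝ) + α + 1) := by
      have := Real.Gamma_add_one hjα.ne'
      rw [show (j:ℝ) + 1 + α + 1 = ((j:ℝ) + α + 1) + 1 by ring, this]
    have hfac1 : ((Nat.factorial (j+1) : ℝ)) = ((j:ℝ)+1) * Nat.factorial j := by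
      rw [Nat.factorial_succ]; push_cast; ring
    have hmj : m - j = (m - (j+1)) + 1 := by omega
    have hfac2 : ((Nat.factorial (m - j) : ℝ)) = ((m:ℝ) - j) * Nat.factorial (m - (j+1)) := by
      rw [hmj, Nat.factorial_succ]
      push_cast [Nat.cast_sub hjm.le, Nat.cast_sub (by omega : j + 1 ≤ m)]
      ring
    push_cast
    rw [hΓrec, hfac1, hfac2]
    have h1 : Real.Gamma ((j:ℝ) + α + 1) ≠ 0 := hΓpos.ne'
    have h2 : ((Nat.factorial (m - (j+1)) : ℝ)) ≠ 0 := Nat.cast_ne_zero.mpr (Nat.factorial_ne_zero _)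
    have h3 : ((Nat.factorial j : ℝ)) ≠ 0 := Nat.cast_ne_zero.mpr (Nat.factorial_ne_zero _)
    have h4 : ((j:ℝ) + α + 1) ≠ 0 := hjα.ne'
    have h5 : ((j:ℝ) + 1) ≠ 0 := by positivity
    have h6 : ((m:ℝ) - j) ≠ 0 := by
      have : (j:ℝ) < m := by exact_mod_cast hjm
      linarith
    field_simp
    ring
  calc lagCoef α m (j+1) * (((j:ℝ)+1) * (((j:ℝ)+1) + α) * t ^ (j + 1 - 1))
        + lagCoef α m j * (((m:ℝ) - j) * t ^ j)
      = (lagCoef α m (j+1) * ((j:ℝ)+1) * ((j:ℝ)+1+α) + lagCoef α m j * ((m:ℝ) - j)) * t ^ j := by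
        rw [Nat.add_sub_cancel]; ring
    _ = 0 := by rw [key, zero_mul]

noncomputable def psiEven (lam a γ : ℝ) (m : ℕ) (x : ℝ) : ℝ :=
  (lam ^ 2 * x ^ 2) ^ ((a + 2 * γ - 1) / 4)
    * Real.exp (-((lam ^ 2 * x ^ 2) ^ (a + 1)) / (2 * (a + 1)))
    * lagPoly ((1 / 2) * ((2 * γ - 1) / (a + 1) - 1)) m ((lam ^ 2 * x ^ 2) ^ (a + 1) / (a + 1))

noncomputable def phi (lam a p : ℝ) (Q : ℝ → ℝ) (x : ℝ) : ℝ :=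
  (lam ^ 2 * x ^ 2) ^ p * Real.exp (-((lam ^ 2 * x ^ 2) ^ (a + 1)) / (2 * (a + 1)))
    * Q ((lam ^ 2 * x ^ 2) ^ (a + 1) / (a + 1))

lemma hasDerivAt_phi (lam a p : ℝ) (Q Q' : ℝ → ℝ) (hQ : ∀ t, HasDerivAt Q (Q' t) t)
    (ha : a + 1 ≠ 0) (hlam : lam ≠ 0) (x : ℝ) (hx : x ≠ 0) :
    HasDerivAt (phi lam a p Q)
      ((2 * lam ^ 2 * x) * (p * phi lam a (p - 1) Q x
        + phi lam a (p + a) Q' x - phi lam a (p + a) Q x / 2)) x := by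
  have hspos : 0 < lam ^ 2 * x ^ 2 := by positivity
  set s : ℝ := lam ^ 2 * x ^ 2 with hs
  have hsq : HasDerivAt (fun x : ℝ => lam ^ 2 * x ^ 2) (2 * lam ^ 2 * x) x := by
    simpa [mul_comm, mul_assoc, mul_left_comm] using (hasDerivAt_pow 2 x).const_mul (lam ^ 2)
  have hf : HasDerivAt (fun x : ℝ => (lam ^ 2 * x ^ 2) ^ p)
      ((p * s ^ (p - 1)) * (2 * lam ^ 2 * x)) x := by
    have := (Real.hasDerivAt_rpow_const (p := p) (Or.inl hspos.ne')).comp x hsq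
    exact this
  have hA : HasDerivAt (fun x : ℝ => (lam ^ 2 * x ^ 2) ^ (a + 1))
      (((a + 1) * s ^ a) * (2 * lam ^ 2 * x)) x := by
    have := (Real.hasDerivAt_rpow_const (p := a + 1) (Or.inl hspos.ne')).comp x hsq
    rw [add_sub_cancel_right] at this
    exact this
  have hg : HasDerivAt (fun x : ℝ => Real.exp (-((lam ^ 2 * x ^ 2) ^ (a + 1)) / (2 * (a + 1))))
      (Real.exp (-(s ^ (a + 1)) / (2 * (a + 1)))
        * (-(((a + 1) * s ^ a) * (2 * lam ^ 2 * x)) / (2 * (a + 1)))) x := by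
    have hin : HasDerivAt (fun x : ℝ => -((lam ^ 2 * x ^ 2) ^ (a + 1)) / (2 * (a + 1)))
        (-(((a + 1) * s ^ a) * (2 * lam ^ 2 * x)) / (2 * (a + 1))) x := hA.neg.div_const _
    exact (Real.hasDerivAt_exp _).comp x hin
  have hu : HasDerivAt (fun x : ℝ => (lam ^ 2 * x ^ 2) ^ (a + 1) / (a + 1))
      ((((a + 1) * s ^ a) * (2 * lam ^ 2 * x)) / (a + 1)) x := hA.div_const _
  have hh : HasDerivAt (fun x : ℝ => Q ((lam ^ 2 * x ^ 2) ^ (a + 1) / (a + 1)))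
      (Q' (s ^ (a + 1) / (a + 1)) * ((((a + 1) * s ^ a) * (2 * lam ^ 2 * x)) / (a + 1))) x :=
    (hQ _).comp x hu
  have hmain := (hf.fun_mul hg).fun_mul hh
  convert hmain using 1
  · rfl
  · rfl
  · rfl
  show _ = _
  unfold phi
  rw [← hs]
  have e1 : s ^ (p + a) = s ^ p * s ^ a := Real.rpow_add hspos p a
  have e2 : s ^ (p - 1) = s ^ p / s := by
    rw [Real.rpow_sub hspos, Real.rpow_one]
  rw [e1, e2]
  field_simp
  ring

set_option maxHeartbeats 3200000 in
lemma ode (lam a γ : ℝ) (hlam : 0 < lam) (ha : -1 < a) (hγ : 1 / 2 < γ) (m : ℕ)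
    (x : ℝ) (hx : x ≠ 0) :
    deriv (deriv (psiEven lam a γ m)) x - (2 * a / x) * deriv (psiEven lam a γ m) x
      + ((a * (3 * a + 2) / 4 + (a + 1) * (γ - 1 / 2) - (γ - 1 / 2) ^ 2) * (x ^ 2)⁻¹
          + (lam ^ 2 * ((a + 1) * (4 * (m : ℝ) + 1) + 2 * γ - 1)) * lam ^ (2 * a) * |x| ^ (2 * a)
          - lam ^ (4 * a + 4) * |x| ^ (4 * a) * x ^ 2) * psiEven lam a γ m x = 0 := by
  have ha1 : a + 1 ≠ 0 := by linarith
  have ha1p : (0:ℝ) < a + 1 := by linarith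
  have hlam' : lam ≠ 0 := hlam.ne'
  set α : ℝ := (1 / 2) * ((2 * γ - 1) / (a + 1) - 1) with hαdef
  set β : ℝ := (a + 2 * γ - 1) / 4 with hβdef
  have hα : -1 < α := by
    rw [hαdef]
    have h2γ : 0 < (2 * γ - 1) / (a + 1) := div_pos (by linarith) ha1p
    linarith
  set L : ℝ → ℝ := lagPoly α m with hL
  set L' : ℝ → ℝ := lagPoly' α m with hL'
  set L'' : ℝ → ℝ := lagPoly'' α m with hL''
  have hLd : ∀ t, HasDerivAt L (L' t) t := fun t => hasDerivAt_lagPoly α m t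
  have hLd' : ∀ t, HasDerivAt L' (L'' t) t := fun t => hasDerivAt_lagPoly' α m t
  have hψ : psiEven lam a γ m = phi lam a β L := rfl
  set D : ℝ → ℝ := fun y => (2 * lam ^ 2 * y) * (β * phi lam a (β - 1) L y
    + phi lam a (β + a) L' y - phi lam a (β + a) L y / 2) with hD
  have hψd : ∀ y : ℝ, y ≠ 0 → HasDerivAt (psiEven lam a γ m) (D y) y := by
    intro y hy
    rw [hψ]
    exact hasDerivAt_phi lam a β L L' hLd ha1 hlam' y hy
  have hnhds : {(0:ℝ)}ᶜ ∈ nhds x := isOpen_compl_singleton.mem_nhds (by simpa using hx)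
  have hderiv1 : deriv (psiEven lam a γ m) =ᶠ[nhds x] D := by
    filter_upwards [hnhds] with y hy
    exact (hψd y (by simpa using hy)).deriv
  have h1 := (hasDerivAt_phi lam a (β - 1) L L' hLd ha1 hlam' x hx).const_mul β
  have h2 := hasDerivAt_phi lam a (β + a) L' L'' hLd' ha1 hlam' x hx
  have h3 := (hasDerivAt_phi lam a (β + a) L L' hLd ha1 hlam' x hx).div_const 2
  have hlin : HasDerivAt (fun y : ℝ => 2 * lam ^ 2 * y) (2 * lam ^ 2) x := by
    simpa using (hasDerivAt_id x).const_mul (2 * lam ^ 2)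
  have hDd := hlin.fun_mul ((h1.fun_add h2).fun_sub h3)
  have hdd : deriv (deriv (psiEven lam a γ m)) x = deriv D x := hderiv1.deriv_eq
  rw [hdd, (hψd x hx).deriv, hψ, hD]
  rw [show deriv (fun y => 2 * lam ^ 2 * y * (β * phi lam a (β - 1) L y
    + phi lam a (β + a) L' y - phi lam a (β + a) L y / 2)) x = _ from hDd.deriv]
  simp only [phi]
  set s := lam ^ 2 * x ^ 2 with hsdef
  have hspos : 0 < s := by rw [hsdef]; positivity
  have habs : 0 < |x| := abs_pos.mpr hx
  have e1 : s ^ (β - 1) = s ^ β / s := by rw [Real.rpow_sub hspos, Real.rpow_one]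
  have e2 : s ^ (β - 1 - 1) = s ^ β / s / s := by
    rw [Real.rpow_sub hspos, Real.rpow_sub hspos, Real.rpow_one]
  have e3 : s ^ (β + a) = s ^ β * s ^ a := Real.rpow_add hspos β a
  have e4 : s ^ (β - 1 + a) = s ^ β / s * s ^ a := by rw [Real.rpow_add hspos, e1]
  have e5 : s ^ (β + a - 1) = s ^ β * s ^ a / s := by
    rw [Real.rpow_sub hspos, e3, Real.rpow_one]
  have e6 : s ^ (β + a + a) = s ^ β * s ^ a * s ^ a := by rw [Real.rpow_add hspos, e3]
  have e7 : s ^ (a + 1) = s ^ a * s := by rw [Real.rpow_add hspos, Real.rpow_one]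
  have rp2 : ∀ y : ℝ, y ^ ((2:ℝ)) = y ^ (2:ℕ) := fun y => by
    rw [show ((2:ℝ)) = ((2:ℕ):ℝ) by norm_num, Real.rpow_natCast]
  have p1 : lam ^ (2 * a) * |x| ^ (2 * a) = s ^ a := by
    rw [← Real.mul_rpow hlam.le (abs_nonneg x)]
    rw [Real.rpow_mul (mul_nonneg hlam.le (abs_nonneg x)), rp2, hsdef, mul_pow, sq_abs]
  have q1 : lam ^ (4 * a + 4) = lam ^ (2*a) * lam ^ (2*a) * lam ^ 2 * lam ^ 2 := by
    rw [show (4:ℝ) * a + 4 = 2*a + (2*a + ((2:ℝ) + 2)) by ring, Real.rpow_add hlam,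
      Real.rpow_add hlam, Real.rpow_add hlam, rp2]
    ring
  have q2 : |x| ^ (4 * a) = |x| ^ (2*a) * |x| ^ (2*a) := by
    rw [show (4:ℝ) * a = 2*a + 2*a by ring, Real.rpow_add habs]
  have p2 : lam ^ (4 * a + 4) * |x| ^ (4 * a) * x ^ 2 = lam ^ 2 * s * (s ^ a * s ^ a) := by
    rw [q1, q2, ← p1, hsdef]; ring
  have p1' : lam ^ 2 * ((a + 1) * (4 * (m:ℝ) + 1) + 2 * γ - 1) * lam ^ (2 * a) * |x| ^ (2 * a)
      = lam ^ 2 * ((a + 1) * (4 * (m:ℝ) + 1) + 2 * γ - 1) * s ^ a := by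
    rw [mul_assoc, p1]
  have p3 : (x ^ 2)⁻¹ = lam ^ 2 / s := by rw [hsdef]; field_simp
  rw [e1, e2, e3, e4, e5, e6, e7, p1', p2, p3]
  have hQpos : 0 < s ^ a := Real.rpow_pos_of_pos hspos a
  have hupos : 0 < s ^ a * s / (a + 1) := div_pos (mul_pos hQpos hspos) ha1p
  have key := lag_ode α hα m (s ^ a * s / (a + 1))
  rw [← hL, ← hL', ← hL''] at key
  have hL2 : L'' (s ^ a * s / (a + 1)) = ((s ^ a * s / (a + 1) - (α + 1))
      * L' (s ^ a * s / (a + 1)) - (m:ℝ) * L (s ^ a * s / (a + 1)))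
      / (s ^ a * s / (a + 1)) := by
    rw [eq_div_iff hupos.ne']
    linarith [key]
  rw [hL2, hβdef, hαdef, hsdef]
  have h2γ1 : ((lam^2*x^2) ^ a * (lam^2*x^2) / (a + 1)) ≠ 0 := by
    rw [← hsdef]; exact hupos.ne'
  field_simp
  ring

/-- `ψ_{2m}` solves the even-parity Schrödinger equation of the deformed parabose
oscillator with `κ² = λ₀²((a+1)(4m+1)+2γ-1)`; equivalently the energy is
`E_{2m} = ħ²κ²/(2m₀) = (a+1)ħω(2m + 1/2 + (γ-1/2)/(a+1))`. -/
theorem stmt16 (m₀ ω hbar a γ : ℝ) (hm₀ : 0 < m₀) (hω : 0 < ω) (hhb : 0 < hbar)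
    (ha : -1 < a) (hγ : 1 / 2 < γ)
    (lam : ℝ) (hlam : lam = Real.sqrt (m₀ * ω / hbar)) (m : ℕ) :
    (∀ x : ℝ, x ≠ 0 →
      deriv (deriv (psiEven lam a γ m)) x - (2 * a / x) * deriv (psiEven lam a γ m) x
        + ((a * (3 * a + 2) / 4 + (a + 1) * (γ - 1 / 2) - (γ - 1 / 2) ^ 2) * (x ^ 2)⁻¹
            + (lam ^ 2 * ((a + 1) * (4 * (m : ℝ) + 1) + 2 * γ - 1)) * lam ^ (2 * a) * |x| ^ (2 * a)
            - lam ^ (4 * a + 4) * |x| ^ (4 * a) * x ^ 2) * psiEven lam a γ m x = 0) ∧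
    hbar ^ 2 * (lam ^ 2 * ((a + 1) * (4 * (m : ℝ) + 1) + 2 * γ - 1)) / (2 * m₀)
      = (a + 1) * hbar * ω * (2 * (m : ℝ) + 1 / 2 + (γ - 1 / 2) / (a + 1)) := by
  have hpos : 0 < m₀ * ω / hbar := by positivity
  have hlampos : 0 < lam := by rw [hlam]; exact Real.sqrt_pos.mpr hpos
  constructor
  · intro x hx
    exact ode lam a γ hlampos ha hγ m x hx
  · have hlam2 : lam ^ 2 = m₀ * ω / hbar := by rw [hlam, Real.sq_sqrt hpos.le]
    rw [hlam2]
    have ha1 : a + 1 ≠ 0 := by linarith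
    field_simp
    ring
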